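/- The probability of having at most n−1 successes in k independent Bernoulli trials with success probability p, for kp ≥ n−1, is at most exp(−(kp − (n−1))²/(2kp)). -/

import Mathlib

private lemma exp_neg_le_quad {t : ℝ} (ht : 0 ≤ t) :
    Real.exp (-t) ≤ 1 - t + t ^ 2 / 2 := by
  set f : ℝ → ℝ := fun x => 1 - x + x ^ 2 / 2 - Real.exp (-x) with hf
  have hderiv : ∀ x : ℝ, HasDerivAt f (-1 + x + Real.exp (-x)) x := by
    intro x
    have h1 : HasDerivAt (fun x : ℝ => Real.exp (-x)) (-Real.exp (-x)) x := by
      exact ((Real.hasDerivAt_exp (-x)).comp x (hasDerivAt_neg x)).congr_deriv (by simp)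
    have h2 : HasDerivAt (fun x : ℝ => 1 - x + x ^ 2 / 2)
        (0 - 1 + (2 : ℕ) * x ^ (2 - 1) / 2) x :=
      ((hasDerivAt_const x (1 : ℝ)).sub (hasDerivAt_id x)).add
        ((hasDerivAt_pow 2 x).div_const 2)
    have := h2.sub h1
    refine HasDerivAt.congr_deriv this ?_
    push_cast
    ring
  have hmono : MonotoneOn f (Set.Ici (0 : ℝ)) := by
    apply monotoneOn_of_deriv_nonneg (convex_Ici 0)
    · exact fun x _ => ((hderiv x).continuousAt).continuousWithinAt
    · exact fun x _ => ((hderiv x).differentiableAt).differentiableWithinAt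
    · intro x _
      rw [(hderiv x).deriv]
      have := Real.add_one_le_exp (-x)
      linarith
  have h0 : f 0 = 0 := by simp [hf]
  have := hmono (Set.self_mem_Ici) (Set.mem_Ici.2 ht) ht
  rw [h0] at this
  simp only [hf] at this
  linarith

/-- (Chernoff bound for the binomial distribution.)  The
probability of at most `n − 1` successes in `k` independent Bernoulli trials with
success probability `p`, when `kp ≥ n − 1`, is at most
`exp(−(kp − (n−1))²/(2kp))`. -/
theorem stmt10 (p : ℝ) (hp0 : 0 ≤ p) (hp1 : p ≤ 1) (k n : ℕ)
    (h : (n : ℝ) - 1 ≤ (k : ℝ) * p) :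
    ∑ i ∈ Finset.range n, (k.choose i : ℝ) * p ^ i * (1 - p) ^ (k - i)
      ≤ Real.exp (-((k : ℝ) * p - ((n : ℝ) - 1)) ^ 2 / (2 * (k : ℝ) * p)) := by
  have hq0 : (0 : ℝ) ≤ 1 - p := by linarith
  rcases Nat.eq_zero_or_pos n with hn | hn
  · subst hn
    simp only [Finset.range_zero, Finset.sum_empty]
    positivity
  set μ : ℝ := (k : ℝ) * p with hμdef
  set m : ℝ := (n : ℝ) - 1 with hmdef
  have hm0 : 0 ≤ m := by
    have : (1 : ℝ) ≤ (n : ℝ) := by exact_mod_cast hn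
    simp only [hmdef]; linarith
  rcases eq_or_lt_of_le (mul_nonneg (Nat.cast_nonneg k) hp0 : (0:ℝ) ≤ μ) with hμ0 | hμpos
  · -- μ = 0, hence m = 0, n = 1
    have hm : m = 0 := le_antisymm (h.trans (le_of_eq hμ0.symm)) hm0
    have hn1 : n = 1 := by
      have : (n : ℝ) = 1 := by simp only [hmdef] at hm; linarith
      exact_mod_cast this
    subst hn1
    rw [show -(μ - m) ^ 2 / (2 * (k:ℝ) * p) = 0 by
      have h1 : μ = 0 := hμ0.symm
      rw [hm, h1]; simp]
    rw [Real.exp_zero]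
    simp only [Finset.range_one, Finset.sum_singleton, Nat.choose_zero_right,
      Nat.cast_one, pow_zero, Nat.sub_zero, one_mul, mul_one]
    calc (1 - p) ^ (k - 0) ≤ 1 ^ (k - 0) := pow_le_pow_left₀ hq0 (by linarith) _
      _ = 1 := one_pow _
  · -- main case
    have hμne : μ ≠ 0 := ne_of_gt hμpos
    set t : ℝ := (μ - m) / μ with htdef
    have ht0 : 0 ≤ t := div_nonneg (by linarith) (le_of_lt hμpos)
    have hnk : n ≤ k + 1 := by
      have hμk : μ ≤ (k : ℝ) := by
        calc μ = (k : ℝ) * p := rfl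
          _ ≤ (k : ℝ) * 1 := by
            exact mul_le_mul_of_nonneg_left hp1 (Nat.cast_nonneg k)
          _ = (k : ℝ) := mul_one _
      have : (n : ℝ) ≤ (k : ℝ) + 1 := by simp only [hmdef] at h; linarith
      exact_mod_cast this
    have hexp : ∀ i : ℕ, (0:ℝ) ≤ p * Real.exp (-t) :=
      fun _ => mul_nonneg hp0 (Real.exp_nonneg _)
    calc ∑ i ∈ Finset.range n, (k.choose i : ℝ) * p ^ i * (1 - p) ^ (k - i)
        ≤ ∑ i ∈ Finset.range n,
            Real.exp (t * m) * ((p * Real.exp (-t)) ^ i * (1 - p) ^ (k - i) * (k.choose i : ℝ)) := by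
          apply Finset.sum_le_sum
          intro i hi
          have him : (i : ℝ) ≤ m := by
            have : i + 1 ≤ n := Finset.mem_range.1 hi
            have : ((i : ℝ) + 1) ≤ (n : ℝ) := by exact_mod_cast this
            simp only [hmdef]; linarith
          have key : (1:ℝ) ≤ Real.exp (t * m) * Real.exp (-t) ^ i := by
            rw [← Real.exp_nat_mul, ← Real.exp_add]
            rw [show (1:ℝ) = Real.exp 0 from (Real.exp_zero).symm]
            apply Real.exp_le_exp.2
            have : (0:ℝ) ≤ t * (m - i) := mul_nonneg ht0 (by linarith)
            nlinarith
          have hterm : (0:ℝ) ≤ (k.choose i : ℝ) * p ^ i * (1 - p) ^ (k - i) := by positivity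
          calc (k.choose i : ℝ) * p ^ i * (1 - p) ^ (k - i)
              = ((k.choose i : ℝ) * p ^ i * (1 - p) ^ (k - i)) * 1 := (mul_one _).symm
            _ ≤ ((k.choose i : ℝ) * p ^ i * (1 - p) ^ (k - i)) *
                (Real.exp (t * m) * Real.exp (-t) ^ i) :=
                mul_le_mul_of_nonneg_left key hterm
            _ = Real.exp (t * m) * ((p * Real.exp (-t)) ^ i * (1 - p) ^ (k - i) * (k.choose i : ℝ)) := by
                rw [mul_pow]; ring
      _ ≤ ∑ i ∈ Finset.range (k + 1),
            Real.exp (t * m) * ((p * Real.exp (-t)) ^ i * (1 - p) ^ (k - i) * (k.choose i : ℝ)) := by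
          apply Finset.sum_le_sum_of_subset_of_nonneg
          · exact Finset.range_subset_range.2 hnk
          · intro i _ _
            have := hexp i
            positivity
      _ = Real.exp (t * m) * (p * Real.exp (-t) + (1 - p)) ^ k := by
          rw [← Finset.mul_sum, add_pow]
      _ ≤ Real.exp (t * m) * Real.exp (p * (Real.exp (-t) - 1)) ^ k := by
          apply mul_le_mul_of_nonneg_left _ (Real.exp_nonneg _)
          apply pow_le_pow_left₀ (by nlinarith [Real.exp_nonneg (-t)])
          have := Real.add_one_le_exp (p * (Real.exp (-t) - 1))
          linarith
      _ = Real.exp (t * m + μ * (Real.exp (-t) - 1)) := by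
          rw [← Real.exp_nat_mul, ← Real.exp_add, hμdef]; ring_nf
      _ ≤ Real.exp (t * m + μ * (-t + t ^ 2 / 2)) := by
          apply Real.exp_le_exp.2
          have hb := exp_neg_le_quad ht0
          have : Real.exp (-t) - 1 ≤ -t + t ^ 2 / 2 := by linarith
          nlinarith [hμpos.le]
      _ = Real.exp (-(μ - m) ^ 2 / (2 * (k : ℝ) * p)) := by
          congr 1
          have h2 : 2 * (k : ℝ) * p = 2 * μ := by rw [hμdef]; ring
          rw [htdef, h2]
          field_simp
          ring
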